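/- (Heine formula) In the power series ring Q(v)⟦x⟧ with the λ-ring structure determined by ψ_n(v) = v^n and ψ_n(x) = x^n, one has Exp(x/(1-v)) = Σ_{m≥0} x^m / Π_{i=1}^m (1-v^i). -/

import Mathlib

/-!
Statement 2 (Heine formula): in `ℚ(v)⟦x⟧` with the λ-ring structure determined by
`ψ_n(v) = v^n`, `ψ_n(x) = x^n`, one has
`Exp (x/(1-v)) = Σ_{m≥0} x^m / Π_{i=1}^m (1 - v^i)`.
Power series over `ℚ(v)` are topologized coefficientwise (product of discrete
topologies) and `Exp f = exp (Σ_{k≥1} ψ_k f / k)` via `tsum`.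
-/

open PowerSeries

noncomputable instance : TopologicalSpace (PowerSeries (RatFunc ℚ)) :=
  @Pi.topologicalSpace (Unit →₀ ℕ) (fun _ => RatFunc ℚ) fun _ => ⊥

/-- `exp` via its power series. -/
noncomputable def expQ (f : PowerSeries (RatFunc ℚ)) : PowerSeries (RatFunc ℚ) :=
  ∑' n : ℕ, ((n.factorial : ℚ)⁻¹) • f ^ n

/-- `Exp f = exp (Σ_{k≥1} ψ_k f / k)`. -/
noncomputable def ExpQ (ψ : ℕ → PowerSeries (RatFunc ℚ) → PowerSeries (RatFunc ℚ))
    (f : PowerSeries (RatFunc ℚ)) : PowerSeries (RatFunc ℚ) :=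
  expQ (∑' k : ℕ, (((k : ℚ) + 1)⁻¹) • ψ (k + 1) f)

/-! ### Auxiliary material -/

open Finset

namespace HeineAux

instance : T2Space (PowerSeries (RatFunc ℚ)) := by
  letI : TopologicalSpace (RatFunc ℚ) := ⊥
  haveI : DiscreteTopology (RatFunc ℚ) := ⟨rfl⟩
  exact Pi.t2Space

instance : CharZero (RatFunc ℚ) :=
  charZero_of_injective_algebraMap (algebraMap ℚ (RatFunc ℚ)).injective

lemma hasSum_of_coeff (F : ℕ → PowerSeries (RatFunc ℚ)) (S : PowerSeries (RatFunc ℚ))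
    (N : ℕ → ℕ)
    (h0 : ∀ n k, N n ≤ k → coeff n (F k) = 0)
    (h2 : ∀ n, ∑ k ∈ range (N n), coeff n (F k) = coeff n S) :
    HasSum F S := by
  letI : TopologicalSpace (RatFunc ℚ) := ⊥
  have key : ∀ d : Unit →₀ ℕ, HasSum (fun k => F k d) (S d) := by
    intro d
    have hd : d = Finsupp.single () (d ()) := by
      ext; simp
    set n := d ()
    have hcc : ∀ k, F k d = coeff n (F k) := by
      intro k; rw [hd]; rfl
    have hS : S d = coeff n S := by rw [hd]; rfl
    simp only [hcc, hS, ← h2 n]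
    exact hasSum_sum_of_ne_finset_zero (fun k hk => h0 n k (by simpa using hk))
  exact Pi.hasSum.2 key

lemma coeff_Asmul (A : Algebra ℚ (RatFunc ℚ)) (q : ℚ) (F : PowerSeries (RatFunc ℚ)) (n : ℕ) :
    PowerSeries.coeff n
      (@HSMul.hSMul ℚ _ _ (@instHSMul _ _
        (@Algebra.toSMul ℚ _ _ _ (@MvPowerSeries.instAlgebra Unit ℚ (RatFunc ℚ) _ _ A))) q F)
      = (q : RatFunc ℚ) * PowerSeries.coeff n F := by
  rw [@Algebra.smul_def ℚ _ _ _ (@MvPowerSeries.instAlgebra Unit ℚ (RatFunc ℚ) _ _ A) q F,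
    @PowerSeries.algebraMap_apply ℚ (RatFunc ℚ) _ _ A, coeff_C_mul]
  congr 1
  exact eq_ratCast (@algebraMap ℚ (RatFunc ℚ) _ _ A) q

noncomputable def dd (k : ℕ) : RatFunc ℚ := (1 - RatFunc.X ^ k)⁻¹

noncomputable def bb (m : ℕ) : RatFunc ℚ :=
  (∏ i ∈ Finset.range m, (1 - RatFunc.X ^ (i + 1)))⁻¹

lemma one_sub_X_pow_ne (k : ℕ) (hk : 1 ≤ k) : (1 - RatFunc.X ^ k : RatFunc ℚ) ≠ 0 := by
  intro h
  have hX : (RatFunc.X : RatFunc ℚ) ^ k = 1 := by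
    have := sub_eq_zero.mp h
    exact this.symm
  have hX' : (algebraMap (Polynomial ℚ) (RatFunc ℚ)) (Polynomial.X ^ k) =
      (algebraMap (Polynomial ℚ) (RatFunc ℚ)) 1 := by
    simpa [map_pow, RatFunc.algebraMap_X] using hX
  have : (Polynomial.X : Polynomial ℚ) ^ k = 1 := RatFunc.algebraMap_injective ℚ hX'
  have := congrArg Polynomial.natDegree this
  simp [Polynomial.natDegree_X_pow] at this
  omega

lemma dd_ne (k : ℕ) (hk : 1 ≤ k) : dd k ≠ 0 := inv_ne_zero (one_sub_X_pow_ne k hk)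

lemma bb_zero : bb 0 = 1 := by simp [bb]

lemma bb_succ (m : ℕ) : bb (m + 1) = bb m * dd (m + 1) := by
  simp [bb, dd, prod_range_succ, mul_inv, mul_comm]

lemma bb_ne (m : ℕ) : bb m ≠ 0 := by
  refine inv_ne_zero (prod_ne_zero_iff.2 fun i _ => ?_)
  exact one_sub_X_pow_ne (i + 1) (by omega)

lemma frac (a b : RatFunc ℚ) (ha : 1 - a ≠ 0) (hb : 1 - b ≠ 0) (hab : 1 - a * b ≠ 0) :
    (1 - a)⁻¹ * (1 - b)⁻¹ = ((1 - a)⁻¹ + (1 - b)⁻¹ - 1) * (1 - a * b)⁻¹ := by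
  field_simp
  ring

lemma pfrac (k n : ℕ) (hk : 1 ≤ k) (hk2 : k ≤ n + 1) :
    dd k * dd (n + 2 - k) = (dd k + dd (n + 2 - k) - 1) * dd (n + 2) := by
  have hxy : RatFunc.X ^ k * RatFunc.X ^ (n + 2 - k) = (RatFunc.X : RatFunc ℚ) ^ (n + 2) := by
    rw [← pow_add]; congr 1; omega
  have := frac (RatFunc.X ^ k) (RatFunc.X ^ (n + 2 - k))
    (one_sub_X_pow_ne k hk) (one_sub_X_pow_ne (n + 2 - k) (by omega))
    (by rw [hxy]; exact one_sub_X_pow_ne (n + 2) (by omega))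
  rw [hxy] at this
  simpa [dd] using this

lemma key : ∀ n : ℕ, ∑ q ∈ range (n + 1), dd (q + 1) * bb (n - q)
    = ((n : RatFunc ℚ) + 1) * bb (n + 1) := by
  intro n
  induction n with
  | zero => simp [bb_succ, bb_zero]
  | succ n ih =>
    rw [sum_range_succ]
    have hstep : ∀ q ∈ range (n + 1),
        dd (q + 1) * bb (n + 1 - q)
          = dd (n + 2) * (dd (q + 1) * bb (n - q)) + dd (n + 2) * bb (n - q + 1)
            - dd (n + 2) * bb (n - q) := by
      intro q hq
      have hq' : q ≤ n := Nat.lt_succ_iff.mp (mem_range.mp hq)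
      have h1 : n + 1 - q = n - q + 1 := by omega
      have hp := pfrac (q + 1) n (by omega) (by omega)
      have h2 : n + 2 - (q + 1) = n - q + 1 := by omega
      rw [h2] at hp
      rw [h1, bb_succ (n - q)]
      linear_combination bb (n - q) * hp
    rw [sum_congr rfl hstep, sum_sub_distrib, sum_add_distrib, ← mul_sum, ← mul_sum, ← mul_sum, ih]
    have e1 : ∑ q ∈ range (n + 1), bb (n - q) = ∑ q ∈ range (n + 1), bb q := by
      have := sum_range_reflect (fun j => bb j) (n + 1)
      simpa using this
    have e2 : ∑ q ∈ range (n + 1), bb (n - q + 1) = ∑ q ∈ range (n + 1), bb (q + 1) := by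
      have := sum_range_reflect (fun j => bb (j + 1)) (n + 1)
      simpa using this
    have tele : ∑ q ∈ range (n + 1), bb (q + 1)
        = ∑ q ∈ range (n + 1), bb q + bb (n + 1) - bb 0 := by
      have h3 := Finset.sum_range_succ' bb (n + 1)
      have h4 := Finset.sum_range_succ bb (n + 1)
      rw [h4] at h3
      linear_combination -h3
    rw [e1, e2, tele, bb_zero]
    have hb2 : bb (n + 2) = bb (n + 1) * dd (n + 2) := bb_succ (n + 1)
    have : n + 1 - (n + 1) = 0 := by omega
    rw [this, bb_zero, hb2]
    push_cast
    ring

noncomputable def gg : PowerSeries (RatFunc ℚ) :=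
  PowerSeries.mk fun n => if n = 0 then 0 else ((n : RatFunc ℚ))⁻¹ * dd n

noncomputable def ee (n : ℕ) : RatFunc ℚ :=
  ∑ j ∈ Finset.range (n + 1),
    ((j.factorial : RatFunc ℚ))⁻¹ * coeff n (gg ^ j)

lemma coeff_gg_pow {n j : ℕ} (h : n < j) : coeff n (gg ^ j) = 0 := by
  induction j generalizing n with
  | zero => omega
  | succ j ih =>
    rw [pow_succ', coeff_mul]
    refine sum_eq_zero fun pq hpq => ?_
    have hm := Finset.HasAntidiagonal.mem_antidiagonal.mp hpq
    rcases Nat.eq_zero_or_pos pq.1 with h0 | h0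
    · have : coeff pq.1 gg = 0 := by simp [h0, gg, coeff_mk]
      rw [this, zero_mul]
    · have : pq.2 < j := by omega
      rw [ih this, mul_zero]

lemma nat_succ_ne (n : ℕ) : ((n : RatFunc ℚ) + 1) ≠ 0 := Nat.cast_add_one_ne_zero n

lemma fact_ne (j : ℕ) : ((j.factorial : RatFunc ℚ)) ≠ 0 :=
  Nat.cast_ne_zero.2 j.factorial_ne_zero

lemma coeff_D_gg (n : ℕ) :
    coeff n (d⁄dX (RatFunc ℚ) gg) = dd (n + 1) := by
  rw [coeff_derivative]
  have h1 : coeff (n + 1) gg = ((n : RatFunc ℚ) + 1)⁻¹ * dd (n + 1) := by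
    simp only [gg, coeff_mk, Nat.succ_ne_zero, if_false]
    push_cast
    ring
  rw [h1]
  have hne := nat_succ_ne n
  field_simp

lemma ee_rec (n : ℕ) :
    ((n : RatFunc ℚ) + 1) * ee (n + 1) = ∑ q ∈ range (n + 1), dd (q + 1) * ee (n - q) := by
  have step1 : ((n : RatFunc ℚ) + 1) * ee (n + 1)
      = ∑ j ∈ range (n + 1), ((j.factorial : RatFunc ℚ))⁻¹ *
          coeff n (gg ^ j * (d⁄dX (RatFunc ℚ) gg)) := by
    rw [ee, mul_sum, Finset.sum_range_succ']
    have hlast : ((n : RatFunc ℚ) + 1) *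
        (((Nat.factorial 0 : RatFunc ℚ))⁻¹ * coeff (n + 1) (gg ^ 0)) = 0 := by
      simp [coeff_one]
    rw [hlast, add_zero]
    refine sum_congr rfl fun j hj => ?_
    have hL : d⁄dX (RatFunc ℚ) (gg ^ (j + 1))
        = (j + 1) • gg ^ j • d⁄dX (RatFunc ℚ) gg := by
      have := Derivation.leibniz_pow (D := d⁄dX (RatFunc ℚ)) (a := gg) (j + 1)
      simpa using this
    have hD : coeff (n + 1) (gg ^ (j + 1)) * ((n : RatFunc ℚ) + 1)
        = ((j : RatFunc ℚ) + 1) * coeff n (gg ^ j * d⁄dX (RatFunc ℚ) gg) := by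
      rw [← coeff_derivative, hL, smul_eq_mul (α := PowerSeries (RatFunc ℚ)), map_nsmul,
        nsmul_eq_mul]
      push_cast
      ring
    have hf : (((j + 1).factorial : RatFunc ℚ))
        = ((j : RatFunc ℚ) + 1) * (j.factorial : RatFunc ℚ) := by
      rw [Nat.factorial_succ]; push_cast; ring
    rw [hf, mul_inv]
    have h1 := nat_succ_ne j
    have h2 := fact_ne j
    field_simp
    linear_combination hD
  have step2 : ∀ j, coeff n (gg ^ j * d⁄dX (RatFunc ℚ) gg)
      = ∑ k ∈ range (n + 1), coeff k (gg ^ j) * dd (n - k + 1) := by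
    intro j
    rw [coeff_mul, Finset.Nat.sum_antidiagonal_eq_sum_range_succ_mk]
    exact sum_congr rfl fun k hk => by rw [coeff_D_gg]
  have step3 : ∀ k ∈ range (n + 1),
      ∑ j ∈ range (n + 1), ((j.factorial : RatFunc ℚ))⁻¹ * coeff k (gg ^ j)
        = ee k := by
    intro k hk
    have hkn : k ≤ n := Nat.lt_succ_iff.mp (mem_range.mp hk)
    rw [ee]
    refine (sum_subset (range_subset_range.2 (by omega)) fun j hj hj2 => ?_).symm
    have : k < j := by simp only [mem_range] at hj hj2; omega
    rw [coeff_gg_pow this, mul_zero]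
  calc ((n : RatFunc ℚ) + 1) * ee (n + 1)
      = ∑ j ∈ range (n + 1), ((j.factorial : RatFunc ℚ))⁻¹ *
          ∑ k ∈ range (n + 1), coeff k (gg ^ j) * dd (n - k + 1) := by
        rw [step1]; exact sum_congr rfl fun j _ => by rw [step2]
    _ = ∑ k ∈ range (n + 1), dd (n - k + 1) *
          ∑ j ∈ range (n + 1), ((j.factorial : RatFunc ℚ))⁻¹ * coeff k (gg ^ j) := by
        simp only [mul_sum]
        rw [sum_comm]
        exact sum_congr rfl fun k _ => sum_congr rfl fun j _ => by ring
    _ = ∑ k ∈ range (n + 1), dd (n - k + 1) * ee k := by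
        exact sum_congr rfl fun k hk => by rw [step3 k hk]
    _ = ∑ q ∈ range (n + 1), dd (q + 1) * ee (n - q) := by
        have := sum_range_reflect (fun j => dd (n - j + 1) * ee j) (n + 1)
        rw [← this]
        refine sum_congr rfl fun q hq => ?_
        have hq' : q ≤ n := Nat.lt_succ_iff.mp (mem_range.mp hq)
        have h1 : n + 1 - 1 - q = n - q := by omega
        have h2 : n - (n - q) = q := by omega
        rw [h1, h2]

lemma ee_eq_bb : ∀ n, ee n = bb n := by
  intro n
  induction n using Nat.strong_induction_on with
  | _ n ih =>
    obtain _ | m := n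
    · simp [ee, bb_zero]
    · have h1 := ee_rec m
      have h2 : ∑ q ∈ range (m + 1), dd (q + 1) * ee (m - q)
          = ∑ q ∈ range (m + 1), dd (q + 1) * bb (m - q) :=
        sum_congr rfl fun q hq => by rw [ih (m - q) (by omega)]
      rw [h2, key m] at h1
      exact mul_left_cancel₀ (nat_succ_ne m) h1

end HeineAux

open HeineAux

theorem stmt2
    (φ : ℕ → RatFunc ℚ →+* RatFunc ℚ)
    (hφ : ∀ n, 1 ≤ n → φ n (RatFunc.X) = RatFunc.X ^ n)
    (ψ : ℕ → PowerSeries (RatFunc ℚ) →+* PowerSeries (RatFunc ℚ))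
    (hψ : ∀ n, 1 ≤ n → ∀ (a : RatFunc ℚ) (m : ℕ),
      ψ n (PowerSeries.C a * PowerSeries.X ^ m) =
        PowerSeries.C (φ n a) * PowerSeries.X ^ (n * m)) :
    ExpQ (fun n => ψ n)
        (PowerSeries.C ((1 - RatFunc.X)⁻¹) * PowerSeries.X) =
      ∑' m : ℕ, PowerSeries.C
          (∏ i ∈ Finset.range m, (1 - RatFunc.X ^ (i + 1)))⁻¹ *
        PowerSeries.X ^ m := by
  classical
  set f : PowerSeries (RatFunc ℚ) :=
    PowerSeries.C ((1 - RatFunc.X)⁻¹) * PowerSeries.X with hfdef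
  have hterm : ∀ k : ℕ,
      ψ (k + 1) f = PowerSeries.C (dd (k + 1)) * PowerSeries.X ^ (k + 1) := by
    intro k
    have h := hψ (k + 1) (by omega) ((1 - RatFunc.X)⁻¹) 1
    rw [pow_one, mul_one] at h
    rw [hfdef, h]
    congr 2
    rw [map_inv₀, map_sub, map_one, hφ (k + 1) (by omega)]
    rfl
  -- the inner sum
  have hgsum : HasSum
      (fun k : ℕ => @HSMul.hSMul ℚ _ _ (@instHSMul _ _
        (@Algebra.toSMul ℚ _ _ _ (@MvPowerSeries.instAlgebra Unit ℚ (RatFunc ℚ) _ _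
          _)))
        (((k : ℚ) + 1)⁻¹) (ψ (k + 1) f)) gg := by
    apply hasSum_of_coeff _ _ (fun n => n)
    · intro n k hk
      rw [hterm k, coeff_Asmul, coeff_C_mul, coeff_X_pow, if_neg (by omega), mul_zero, mul_zero]
    · intro n
      match n with
      | 0 =>
        simp [gg, coeff_mk]
      | Nat.succ m =>
        rw [Finset.sum_eq_single_of_mem m (self_mem_range_succ m)]
        · rw [hterm m, coeff_Asmul, coeff_C_mul, coeff_X_pow, if_pos rfl, mul_one]
          simp only [gg, coeff_mk, Nat.succ_ne_zero, if_false]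
          push_cast
          ring
        · intro k hk hkm
          rw [hterm k, coeff_Asmul, coeff_C_mul, coeff_X_pow, if_neg (by omega), mul_zero,
            mul_zero]
  -- `expQ gg`
  have hEsum : HasSum
      (fun j : ℕ => @HSMul.hSMul ℚ _ _ (@instHSMul _ _
        (@Algebra.toSMul ℚ _ _ _ (@MvPowerSeries.instAlgebra Unit ℚ (RatFunc ℚ) _ _
          _)))
        ((j.factorial : ℚ)⁻¹) (gg ^ j))
      (PowerSeries.mk ee) := by
    apply hasSum_of_coeff _ _ (fun n => n + 1)
    · intro n k hk
      rw [coeff_Asmul, coeff_gg_pow (by omega), mul_zero]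
    · intro n
      rw [coeff_mk, ee]
      refine Finset.sum_congr rfl fun j _ => ?_
      rw [coeff_Asmul]
      push_cast
      ring
  -- the right-hand side
  have hRsum : HasSum
      (fun m : ℕ => PowerSeries.C
        (∏ i ∈ Finset.range m, (1 - RatFunc.X ^ (i + 1)))⁻¹ * PowerSeries.X ^ m)
      (PowerSeries.mk bb) := by
    apply hasSum_of_coeff _ _ (fun n => n + 1)
    · intro n k hk
      rw [coeff_C_mul, coeff_X_pow, if_neg (by omega), mul_zero]
    · intro n
      rw [Finset.sum_eq_single_of_mem n (self_mem_range_succ n)]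
      · rw [coeff_C_mul, coeff_X_pow, if_pos rfl, mul_one, coeff_mk]
        rfl
      · intro k hk hkn
        rw [coeff_C_mul, coeff_X_pow, if_neg (by omega), mul_zero]
  have hg := hgsum.tsum_eq
  have hR := hRsum.tsum_eq
  have hE : expQ gg = PowerSeries.mk ee := by
    simp only [expQ]
    exact hEsum.tsum_eq
  simp only [ExpQ]
  rw [hg, hE, hR]
  ext n
  rw [coeff_mk, coeff_mk, ee_eq_bb]
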